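/- Uniform differentiability bound for the resolvent-type integral: let c > 0 and η₀ > 0. For measurable complex functions z₁, z₂ on ℝ with sup|zᵢ| ≤ 1, define Ψ_z(λ̃, ω) = z₁(ω) / [(c + iω + λ̃)(c + iω + λ̃ − λ̃ z₂(ω))]. Then (i) λ̃ ↦ ∫_{-∞}^{∞} Ψ_z(λ̃, ω) dω is continuously differentiable on [0, η₀] with derivative bounded by a constant depending only on c and η₀ (not on z); and (ii) there is K > 0 depending only on c and η₀ such that for any other pair z̃ with sup|z̃ᵢ| ≤ 1 and any W ≥ 1, sup_{λ̃∈[0,η₀]} |∫ Ψ_z(λ̃,ω)dω − ∫ Ψ_{z̃}(λ̃,ω)dω| ≤ K ( max_{i=1,2} sup_{|ω|≤W} |zᵢ(ω) − z̃ᵢ(ω)| + 1/W ). -/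

import Mathlib

open MeasureTheory Complex


set_option maxHeartbeats 1000000 in
lemma denom_lb' (c η₀ : ℝ) (hc : 0 < c) (hη₀ : 0 < η₀)
    (l ω : ℝ) (hl₁ : -(c/4) < l) (hl₂ : l < η₀ + c/4) (z : ℂ) (hz : ‖z‖ ≤ 1) :
    3*c/(8*(2*c+η₀)) * Real.sqrt (c^2+ω^2) ≤ ‖(c : ℂ) + ω*I + l - l*z‖ := by
  have hX : (0:ℝ) ≤ c^2 + ω^2 := by positivity
  set s := Real.sqrt (c^2+ω^2) with hs
  have hs0 : 0 ≤ s := Real.sqrt_nonneg _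
  have hs2 : s^2 = c^2+ω^2 := Real.sq_sqrt hX
  have hcl : 3*c/4 ≤ c + l := by linarith
  have hcl0 : 0 < c + l := by linarith
  set t := Real.sqrt ((c+l)^2 + ω^2) with ht
  have ht0 : 0 ≤ t := Real.sqrt_nonneg _
  have ht2 : t^2 = (c+l)^2 + ω^2 := Real.sq_sqrt (by positivity)
  have htcl : c + l ≤ t := by
    rw [ht]
    calc c + l = Real.sqrt ((c+l)^2) := (Real.sqrt_sq hcl0.le).symm
    _ ≤ _ := Real.sqrt_le_sqrt (by nlinarith [sq_nonneg ω])
  have hts : 3/4 * s ≤ t := by nlinarith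
  have hnorm : ‖(c : ℂ) + ω*I + l‖ = t := by
    have e : (c : ℂ) + ω*I + l = ((c+l : ℝ) : ℂ) + (ω:ℝ)*I := by push_cast; ring
    rw [e, Complex.norm_add_mul_I, ht]
  have hlz : ‖(l:ℂ)*z‖ ≤ |l| := by
    rw [norm_mul, Complex.norm_real, Real.norm_eq_abs]
    nlinarith [abs_nonneg l, norm_nonneg z]
  have hkey : t - |l| ≤ ‖(c : ℂ) + ω*I + l - l*z‖ := by
    have h := norm_sub_norm_le ((c : ℂ) + ω*I + l) ((l:ℂ)*z)
    rw [hnorm] at h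
    linarith
  have habs : c + l - |l| ≥ c/2 := by
    rcases abs_cases l with ⟨h, _⟩ | ⟨h, _⟩ <;> rw [h] <;> linarith
  have hclub : c + l ≤ 2*c + η₀ := by linarith
  have h1 : (2*c+η₀) * (t - |l|) ≥ t * (c/2) := by
    have h2 : |l| * (c+l) ≤ |l| * t := by
      have := abs_nonneg l; nlinarith
    nlinarith [abs_nonneg l, habs, htcl]
  have h2 : t * (c/2) ≥ 3/4*s * (c/2) := by nlinarith
  have hpos : (0:ℝ) < 8*(2*c+η₀) := by linarith
  have htl0 : 0 ≤ t - |l| := by nlinarith [abs_nonneg l]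
  rw [div_mul_eq_mul_div, div_le_iff₀ hpos]
  nlinarith [hkey, h1, h2, htl0]

lemma frac_bound' (m c X a b n : ℝ) (hc : 0 < c) (hc2 : c^2 ≤ X) (hm : 0 < m)
    (ha : m * Real.sqrt X ≤ a) (hb : m * Real.sqrt X ≤ b)
    (hn : n ≤ b + 2*a) (hn0 : 0 ≤ n) :
    n / (a*b)^2 ≤ 3/(m^3*c) * X⁻¹ := by
  have hX : (0:ℝ) < X := lt_of_lt_of_le (by positivity) hc2
  set s := Real.sqrt X with hs
  have hs2 : s^2 = X := Real.sq_sqrt hX.le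
  have hsc : c ≤ s := by
    rw [hs]; calc c = Real.sqrt (c^2) := (Real.sqrt_sq hc.le).symm
    _ ≤ _ := Real.sqrt_le_sqrt hc2
  have hs0 : 0 < s := lt_of_lt_of_le hc hsc
  have hms : 0 < m*s := by positivity
  have ha0 : 0 < a := lt_of_lt_of_le hms ha
  have hb0 : 0 < b := lt_of_lt_of_le hms hb
  have ha2 : m^2*s^2 ≤ a^2 := by nlinarith
  have hb2 : m^2*s^2 ≤ b^2 := by nlinarith
  have k1 : m^3*c*s^2 ≤ m^3*s^3 := by nlinarith [mul_le_mul_of_nonneg_left hsc (by positivity : (0:ℝ) ≤ m^3*s^2)]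
  have k3 : (m*s)*(m^2*s^2) ≤ b * a^2 := mul_le_mul hb ha2 (by positivity) hb0.le
  have k4 : (m*s)*(m^2*s^2) ≤ a * b^2 := mul_le_mul ha hb2 (by positivity) ha0.le
  have e1 : b*(m^3*c*s^2) ≤ a^2*b^2 := by nlinarith
  have e2 : a*(m^3*c*s^2) ≤ a^2*b^2 := by nlinarith
  have key : n * (m^3*c*s^2) ≤ 3*(a*b)^2 := by nlinarith [mul_le_mul_of_nonneg_right hn (by positivity : (0:ℝ) ≤ m^3*c*s^2)]
  rw [← hs2]
  have h3 : 3/(m^3*c) * (s^2)⁻¹ = 3/(m^3*c*s^2) := by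
    field_simp
  rw [h3, div_le_div_iff₀ (by positivity) (by positivity)]
  linarith [key]

lemma g_integrable' (c : ℝ) (hc : 0 < c) : Integrable (fun ω : ℝ => (c^2+ω^2)⁻¹) := by
  have h := (integrable_inv_one_add_sq).const_mul (max 1 (c^2)⁻¹)
  refine h.mono' ?_ (ae_of_all _ fun ω => ?_)
  · exact (Continuous.inv₀ (by continuity) (fun x => by positivity)).aestronglyMeasurable
  · have h1 : (1:ℝ) ≤ max 1 (c^2)⁻¹ := le_max_left _ _
    have h2 : (1:ℝ) ≤ max 1 (c^2)⁻¹ * c^2 := by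
      rcases le_total 1 (c^2) with h | h
      · nlinarith
      · have h3 : (c^2)⁻¹ ≤ max 1 (c^2)⁻¹ := le_max_right _ _
        have hc2 : (0:ℝ) < c^2 := by positivity
        calc (1:ℝ) = (c^2)⁻¹ * c^2 := by field_simp
        _ ≤ _ := by nlinarith
    have e0 : ‖(c^2+ω^2)⁻¹‖ = (c^2+ω^2)⁻¹ := by
      rw [Real.norm_eq_abs, _root_.abs_of_nonneg]; positivity
    rw [e0, ← one_div, show (1 ⊔ (c^2)⁻¹) * (1+ω^2)⁻¹ = (1 ⊔ (c^2)⁻¹) / (1+ω^2) from (div_eq_mul_inv _ _).symm,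
      div_le_div_iff₀ (by positivity) (by positivity)]
    nlinarith

noncomputable def Fd (c : ℝ) (z₁ z₂ : ℝ → ℂ) (l ω : ℝ) : ℂ :=
  (0 * ((c + ω*I + l) * (c + ω*I + l - l*z₂ ω)) -
    z₁ ω * (1*(c + ω*I + l - l*z₂ ω) + (c + ω*I + l)*(1 - z₂ ω))) /
  ((c + ω*I + l) * (c + ω*I + l - l*z₂ ω))^2

lemma psi_meas (c : ℝ) (z₁ z₂ : ℝ → ℂ) (hz₁ : Measurable z₁) (hz₂ : Measurable z₂) (l : ℝ) :
    AEStronglyMeasurable (fun ω : ℝ => z₁ ω / ((c + ω*I + l) * (c + ω*I + l - l*z₂ ω))) volume := by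
  apply Measurable.aestronglyMeasurable
  fun_prop

lemma Fd_meas (c : ℝ) (z₁ z₂ : ℝ → ℂ) (hz₁ : Measurable z₁) (hz₂ : Measurable z₂) (l : ℝ) :
    AEStronglyMeasurable (fun ω : ℝ => Fd c z₁ z₂ l ω) volume := by
  apply Measurable.aestronglyMeasurable
  unfold Fd
  fun_prop

lemma hasDerivAt_psi (c : ℝ) (z₁ z₂ : ℝ → ℂ) (l ω : ℝ)
    (hne : ((c:ℂ) + ω*I + l) * ((c:ℂ) + ω*I + l - l*z₂ ω) ≠ 0) :
    HasDerivAt (fun l' : ℝ => z₁ ω / ((c + ω*I + l') * (c + ω*I + l' - l'*z₂ ω)))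
      (Fd c z₁ z₂ l ω) l := by
  have h₁ : HasDerivAt (fun l' : ℝ => (c:ℂ) + ω*I + l') 1 l := by
    have e : HasDerivAt (fun w : ℂ => (c:ℂ) + ω*I + w) 1 (l:ℂ) :=
      (hasDerivAt_id _).const_add _
    exact e.comp_ofReal
  have h₂ : HasDerivAt (fun l' : ℝ => (c:ℂ) + ω*I + l' - l'*z₂ ω) (1 - z₂ ω) l := by
    have e : HasDerivAt (fun w : ℂ => (c:ℂ) + ω*I + w - w*z₂ ω) (1 - 1*z₂ ω) (l:ℂ) :=
      ((hasDerivAt_id _).const_add _).sub ((hasDerivAt_id _).mul_const _)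
    simpa using e.comp_ofReal
  exact (hasDerivAt_const l (z₁ ω)).div (h₁.mul h₂) hne



lemma d1_lb (c η₀ : ℝ) (hc : 0 < c) (hη₀ : 0 < η₀)
    (l ω : ℝ) (hl₁ : -(c/4) < l) (hl₂ : l < η₀ + c/4) :
    3*c/(8*(2*c+η₀)) * Real.sqrt (c^2+ω^2) ≤ ‖(c : ℂ) + ω*I + l‖ := by
  have h := denom_lb' c η₀ hc hη₀ l ω hl₁ hl₂ 0 (by simp)
  simpa using h

lemma mpos (c η₀ : ℝ) (hc : 0 < c) (hη₀ : 0 < η₀) : 0 < 3*c/(8*(2*c+η₀)) := by positivity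

lemma sqrt_pos' (c ω : ℝ) (hc : 0 < c) : c ≤ Real.sqrt (c^2+ω^2) := by
  calc c = Real.sqrt (c^2) := (Real.sqrt_sq hc.le).symm
  _ ≤ _ := Real.sqrt_le_sqrt (by nlinarith [sq_nonneg ω])

lemma denom_ne (c η₀ : ℝ) (hc : 0 < c) (hη₀ : 0 < η₀)
    (l ω : ℝ) (hl₁ : -(c/4) < l) (hl₂ : l < η₀ + c/4) (z₂ : ℝ → ℂ) (hz₂ : ∀ ω, ‖z₂ ω‖ ≤ 1) :
    ((c:ℂ) + ω*I + l) * ((c:ℂ) + ω*I + l - l*z₂ ω) ≠ 0 := by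
  have hm := mpos c η₀ hc hη₀
  have hsq : 0 < Real.sqrt (c^2+ω^2) := lt_of_lt_of_le hc (sqrt_pos' c ω hc)
  have h1 := d1_lb c η₀ hc hη₀ l ω hl₁ hl₂
  have h2 := denom_lb' c η₀ hc hη₀ l ω hl₁ hl₂ (z₂ ω) (hz₂ ω)
  apply mul_ne_zero <;> [skip; skip] <;>
    first
    | (intro h0; rw [h0, norm_zero] at h1; nlinarith)
    | (intro h0; rw [h0, norm_zero] at h2; nlinarith)

-- pointwise bound for Ψ
lemma psi_bound (c η₀ : ℝ) (hc : 0 < c) (hη₀ : 0 < η₀) (z₁ z₂ : ℝ → ℂ)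
    (hb₁ : ∀ ω, ‖z₁ ω‖ ≤ 1) (hb₂ : ∀ ω, ‖z₂ ω‖ ≤ 1)
    (l ω : ℝ) (hl₁ : -(c/4) < l) (hl₂ : l < η₀ + c/4) :
    ‖z₁ ω / ((c + ω*I + l) * (c + ω*I + l - l*z₂ ω))‖
      ≤ (3*c/(8*(2*c+η₀)))⁻¹^2 * (c^2+ω^2)⁻¹ := by
  set m := 3*c/(8*(2*c+η₀)) with hm
  have hm0 := mpos c η₀ hc hη₀
  have hsq : 0 < Real.sqrt (c^2+ω^2) := lt_of_lt_of_le hc (sqrt_pos' c ω hc)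
  have h1 := d1_lb c η₀ hc hη₀ l ω hl₁ hl₂
  have h2 := denom_lb' c η₀ hc hη₀ l ω hl₁ hl₂ (z₂ ω) (hb₂ ω)
  rw [norm_div, norm_mul]
  have hX : m*Real.sqrt (c^2+ω^2) * (m*Real.sqrt (c^2+ω^2)) = m^2 * (c^2+ω^2) := by
    have := Real.mul_self_sqrt (show (0:ℝ) ≤ c^2+ω^2 by positivity)
    nlinarith
  have hden : m^2 * (c^2+ω^2) ≤ ‖(c:ℂ) + ω*I + l‖ * ‖(c:ℂ) + ω*I + l - l*z₂ ω‖ := by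
    rw [← hX]
    exact mul_le_mul h1 h2 (by positivity) (le_trans (by positivity) h1)
  calc ‖z₁ ω‖ / (‖(c:ℂ) + ω*I + l‖ * ‖(c:ℂ) + ω*I + l - l*z₂ ω‖)
      ≤ 1 / (m^2 * (c^2+ω^2)) := by
        apply div_le_div₀ (by norm_num) (hb₁ ω) (by positivity) hden
  _ = m⁻¹^2 * (c^2+ω^2)⁻¹ := by rw [one_div, mul_inv]; ring

lemma Fd_bound (c η₀ : ℝ) (hc : 0 < c) (hη₀ : 0 < η₀) (z₁ z₂ : ℝ → ℂ)
    (hb₁ : ∀ ω, ‖z₁ ω‖ ≤ 1) (hb₂ : ∀ ω, ‖z₂ ω‖ ≤ 1)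
    (l ω : ℝ) (hl₁ : -(c/4) < l) (hl₂ : l < η₀ + c/4) :
    ‖Fd c z₁ z₂ l ω‖ ≤ 3/((3*c/(8*(2*c+η₀)))^3*c) * (c^2+ω^2)⁻¹ := by
  set m := 3*c/(8*(2*c+η₀)) with hm
  have hm0 := mpos c η₀ hc hη₀
  have h1 := d1_lb c η₀ hc hη₀ l ω hl₁ hl₂
  have h2 := denom_lb' c η₀ hc hη₀ l ω hl₁ hl₂ (z₂ ω) (hb₂ ω)
  set a := ‖(c:ℂ) + ω*I + l‖ with hA
  set b := ‖(c:ℂ) + ω*I + l - l*z₂ ω‖ with hB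
  have hnum : ‖0 * (((c:ℂ) + ω*I + l) * ((c:ℂ) + ω*I + l - l*z₂ ω)) -
      z₁ ω * (1*((c:ℂ) + ω*I + l - l*z₂ ω) + ((c:ℂ) + ω*I + l)*(1 - z₂ ω))‖ ≤ b + 2*a := by
    rw [zero_mul, zero_sub, norm_neg, norm_mul]
    calc ‖z₁ ω‖ * ‖1*((c:ℂ) + ω*I + l - l*z₂ ω) + ((c:ℂ) + ω*I + l)*(1 - z₂ ω)‖
        ≤ 1 * (‖1*((c:ℂ) + ω*I + l - l*z₂ ω)‖ + ‖((c:ℂ) + ω*I + l)*(1 - z₂ ω)‖) := by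
          apply mul_le_mul (hb₁ ω) (norm_add_le _ _) (norm_nonneg _) one_pos.le
    _ ≤ b + 2*a := by
        rw [one_mul, one_mul, norm_mul]
        have : ‖(1:ℂ) - z₂ ω‖ ≤ 2 := by
          calc ‖(1:ℂ) - z₂ ω‖ ≤ ‖(1:ℂ)‖ + ‖z₂ ω‖ := norm_sub_le _ _
          _ ≤ 2 := by rw [norm_one]; linarith [hb₂ ω]
        nlinarith [norm_nonneg ((c:ℂ) + ω*I + l), this]
  unfold Fd
  rw [norm_div, norm_pow, norm_mul, ← hA, ← hB]
  exact frac_bound' m c (c^2+ω^2) a b _ hc (by nlinarith [sq_nonneg ω]) hm0 h1 h2 hnum (norm_nonneg _)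


lemma psi_int (c η₀ : ℝ) (hc : 0 < c) (hη₀ : 0 < η₀) (z₁ z₂ : ℝ → ℂ)
    (hz₁ : Measurable z₁) (hz₂ : Measurable z₂)
    (hb₁ : ∀ ω, ‖z₁ ω‖ ≤ 1) (hb₂ : ∀ ω, ‖z₂ ω‖ ≤ 1)
    (l : ℝ) (hl₁ : -(c/4) < l) (hl₂ : l < η₀ + c/4) :
    Integrable (fun ω : ℝ => z₁ ω / ((c + ω*I + l) * (c + ω*I + l - l*z₂ ω))) := by
  refine ((g_integrable' c hc).const_mul ((3*c/(8*(2*c+η₀)))⁻¹^2)).mono'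
    (psi_meas c z₁ z₂ hz₁ hz₂ l) (ae_of_all _ fun ω => ?_)
  exact psi_bound c η₀ hc hη₀ z₁ z₂ hb₁ hb₂ l ω hl₁ hl₂

lemma Fd_int (c η₀ : ℝ) (hc : 0 < c) (hη₀ : 0 < η₀) (z₁ z₂ : ℝ → ℂ)
    (hz₁ : Measurable z₁) (hz₂ : Measurable z₂)
    (hb₁ : ∀ ω, ‖z₁ ω‖ ≤ 1) (hb₂ : ∀ ω, ‖z₂ ω‖ ≤ 1)
    (l : ℝ) (hl₁ : -(c/4) < l) (hl₂ : l < η₀ + c/4) :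
    Integrable (fun ω : ℝ => Fd c z₁ z₂ l ω) := by
  refine ((g_integrable' c hc).const_mul (3/((3*c/(8*(2*c+η₀)))^3*c))).mono'
    (Fd_meas c z₁ z₂ hz₁ hz₂ l) (ae_of_all _ fun ω => ?_)
  exact Fd_bound c η₀ hc hη₀ z₁ z₂ hb₁ hb₂ l ω hl₁ hl₂

lemma deriv_integral (c η₀ : ℝ) (hc : 0 < c) (hη₀ : 0 < η₀) (z₁ z₂ : ℝ → ℂ)
    (hz₁ : Measurable z₁) (hz₂ : Measurable z₂)
    (hb₁ : ∀ ω, ‖z₁ ω‖ ≤ 1) (hb₂ : ∀ ω, ‖z₂ ω‖ ≤ 1)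
    (l : ℝ) (hl : l ∈ Set.Icc 0 η₀) :
    HasDerivAt (fun l' : ℝ => ∫ ω : ℝ, z₁ ω / ((c + ω*I + l') * (c + ω*I + l' - l'*z₂ ω)))
      (∫ ω : ℝ, Fd c z₁ z₂ l ω) l := by
  obtain ⟨hl0, hlη⟩ := hl
  have hball : ∀ x ∈ Metric.ball l (c/4), -(c/4) < x ∧ x < η₀ + c/4 := by
    intro x hx
    rw [Metric.mem_ball, Real.dist_eq, abs_sub_lt_iff] at hx
    exact ⟨by linarith [hx.2], by linarith [hx.1]⟩
  have h := hasDerivAt_integral_of_dominated_loc_of_deriv_le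
    (F := fun (x : ℝ) (ω : ℝ) => z₁ ω / ((c + ω*I + x) * (c + ω*I + x - x*z₂ ω)))
    (F' := fun (x : ℝ) (ω : ℝ) => Fd c z₁ z₂ x ω)
    (bound := fun ω => 3/((3*c/(8*(2*c+η₀)))^3*c) * (c^2+ω^2)⁻¹)
    (Metric.ball_mem_nhds l (show (0:ℝ) < c/4 by positivity))
    (Filter.Eventually.of_forall fun x => psi_meas c z₁ z₂ hz₁ hz₂ x)
    (psi_int c η₀ hc hη₀ z₁ z₂ hz₁ hz₂ hb₁ hb₂ l (by linarith) (by linarith))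
    (Fd_meas c z₁ z₂ hz₁ hz₂ l)
    (ae_of_all _ fun ω x hx =>
      Fd_bound c η₀ hc hη₀ z₁ z₂ hb₁ hb₂ x ω (hball x hx).1 (hball x hx).2)
    ((g_integrable' c hc).const_mul _)
    (ae_of_all _ fun ω x hx =>
      hasDerivAt_psi c z₁ z₂ x ω
        (denom_ne c η₀ hc hη₀ x ω (hball x hx).1 (hball x hx).2 z₂ hb₂))
  exact h.2

lemma contD (c η₀ : ℝ) (hc : 0 < c) (hη₀ : 0 < η₀) (z₁ z₂ : ℝ → ℂ)
    (hz₁ : Measurable z₁) (hz₂ : Measurable z₂)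
    (hb₁ : ∀ ω, ‖z₁ ω‖ ≤ 1) (hb₂ : ∀ ω, ‖z₂ ω‖ ≤ 1) :
    ContinuousOn (fun l : ℝ => ∫ ω : ℝ, Fd c z₁ z₂ l ω) (Set.Icc 0 η₀) := by
  intro l hl
  apply ContinuousAt.continuousWithinAt
  apply continuousAt_of_dominated (bound := fun ω => 3/((3*c/(8*(2*c+η₀)))^3*c) * (c^2+ω^2)⁻¹)
  · exact Filter.Eventually.of_forall fun x => Fd_meas c z₁ z₂ hz₁ hz₂ x
  · filter_upwards [Metric.ball_mem_nhds l (show (0:ℝ) < c/4 by positivity)] with x hx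
    have hball : -(c/4) < x ∧ x < η₀ + c/4 := by
      rw [Metric.mem_ball, Real.dist_eq, abs_sub_lt_iff] at hx
      exact ⟨by linarith [hx.2, hl.1], by linarith [hx.1, hl.2]⟩
    exact ae_of_all _ fun ω => Fd_bound c η₀ hc hη₀ z₁ z₂ hb₁ hb₂ x ω hball.1 hball.2
  · exact (g_integrable' c hc).const_mul _
  · refine ae_of_all _ fun ω => ?_
    unfold Fd
    apply ContinuousAt.div
    · fun_prop
    · fun_prop
    · exact pow_ne_zero 2
        (denom_ne c η₀ hc hη₀ l ω (by linarith [hl.1]) (by linarith [hl.2]) z₂ hb₂)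

set_option maxHeartbeats 2000000 in
lemma diff_bound (c η₀ : ℝ) (hc : 0 < c) (hη₀ : 0 < η₀) (z₁ z₂ zt₁ zt₂ : ℝ → ℂ)
    (hb₁ : ∀ ω, ‖z₁ ω‖ ≤ 1) (hb₂ : ∀ ω, ‖z₂ ω‖ ≤ 1)
    (hbt₁ : ∀ ω, ‖zt₁ ω‖ ≤ 1) (hbt₂ : ∀ ω, ‖zt₂ ω‖ ≤ 1)
    (l ω : ℝ) (hl0 : 0 ≤ l) (hlη : l ≤ η₀) :
    ‖z₁ ω / ((c + ω*I + l) * (c + ω*I + l - l*z₂ ω)) -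
      zt₁ ω / ((c + ω*I + l) * (c + ω*I + l - l*zt₂ ω))‖ ≤
    ((3*c/(8*(2*c+η₀)))⁻¹^2 + η₀/((3*c/(8*(2*c+η₀)))^3*c)) *
      ((‖z₁ ω - zt₁ ω‖ + ‖z₂ ω - zt₂ ω‖) * (c^2+ω^2)⁻¹) := by
  have hl₁ : -(c/4) < l := by linarith
  have hl₂ : l < η₀ + c/4 := by linarith
  set m := 3*c/(8*(2*c+η₀)) with hm
  have hm0 := mpos c η₀ hc hη₀
  rw [← hm] at hm0
  set X := c^2+ω^2 with hX
  have hXpos : (0:ℝ) < X := by positivity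
  have hsX : c ≤ Real.sqrt X := sqrt_pos' c ω hc
  have hs0 : 0 < Real.sqrt X := lt_of_lt_of_le hc hsX
  have hs2 : Real.sqrt X ^ 2 = X := Real.sq_sqrt hXpos.le
  have ha := d1_lb c η₀ hc hη₀ l ω hl₁ hl₂
  have hb := denom_lb' c η₀ hc hη₀ l ω hl₁ hl₂ (z₂ ω) (hb₂ ω)
  have hbt := denom_lb' c η₀ hc hη₀ l ω hl₁ hl₂ (zt₂ ω) (hbt₂ ω)
  rw [← hm, ← hX] at ha hb hbt
  set a := ‖(c:ℂ) + ω*I + l‖ with hA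
  set b := ‖(c:ℂ) + ω*I + l - l*z₂ ω‖ with hB
  set bt := ‖(c:ℂ) + ω*I + l - l*zt₂ ω‖ with hBt
  have hms : 0 < m * Real.sqrt X := by positivity
  have ha0 : 0 < a := lt_of_lt_of_le hms ha
  have hb0 : 0 < b := lt_of_lt_of_le hms hb
  have hbt0 : 0 < bt := lt_of_lt_of_le hms hbt
  have hane : ((c:ℂ) + ω*I + l) ≠ 0 := by
    intro h0; rw [hA, h0, norm_zero] at ha0; exact lt_irrefl _ ha0
  have hbne : ((c:ℂ) + ω*I + l - l*z₂ ω) ≠ 0 := by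
    intro h0; rw [hB, h0, norm_zero] at hb0; exact lt_irrefl _ hb0
  have hbtne : ((c:ℂ) + ω*I + l - l*zt₂ ω) ≠ 0 := by
    intro h0; rw [hBt, h0, norm_zero] at hbt0; exact lt_irrefl _ hbt0
  have identity : z₁ ω / ((c + ω*I + l) * (c + ω*I + l - l*z₂ ω)) -
      zt₁ ω / ((c + ω*I + l) * (c + ω*I + l - l*zt₂ ω)) =
      (z₁ ω - zt₁ ω) / ((c + ω*I + l) * (c + ω*I + l - l*z₂ ω)) +
      zt₁ ω * ((l : ℂ) * (z₂ ω - zt₂ ω)) /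
        (((c + ω*I + l) * (c + ω*I + l - l*z₂ ω)) * (c + ω*I + l - l*zt₂ ω)) := by
    field_simp
    ring
  rw [identity]
  have habP : m^2 * X ≤ a*b := by nlinarith
  have p1 : (m*Real.sqrt X)*(m*Real.sqrt X) ≤ a*b := mul_le_mul ha hb hms.le (by positivity)
  have p2 : ((m*Real.sqrt X)*(m*Real.sqrt X))*(m*Real.sqrt X) ≤ (a*b)*bt :=
    mul_le_mul p1 hbt hms.le (by positivity)
  have e : m*Real.sqrt X*(m*Real.sqrt X)*(m*Real.sqrt X) = m^3*(Real.sqrt X^2*Real.sqrt X) := by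
    ring
  rw [hs2] at e
  have habtP : m^3*c*X ≤ a*b*bt := by
    calc m^3*c*X = m^3*(X*c) := by ring
    _ ≤ m^3*(X*Real.sqrt X) :=
      mul_le_mul_of_nonneg_left (mul_le_mul_of_nonneg_left hsX hXpos.le) (by positivity)
    _ = m*Real.sqrt X*(m*Real.sqrt X)*(m*Real.sqrt X) := e.symm
    _ ≤ a*b*bt := p2
  have t1 : ‖(z₁ ω - zt₁ ω) / ((c + ω*I + l) * ((c:ℂ) + ω*I + l - l*z₂ ω))‖
      ≤ ‖z₁ ω - zt₁ ω‖ / (m^2 * X) := by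
    rw [norm_div, norm_mul, ← hA, ← hB]
    exact div_le_div_of_nonneg_left (norm_nonneg _) (by positivity) habP
  have t2 : ‖zt₁ ω * ((l : ℂ) * (z₂ ω - zt₂ ω)) /
        ((((c:ℂ) + ω*I + l) * ((c:ℂ) + ω*I + l - l*z₂ ω)) * ((c:ℂ) + ω*I + l - l*zt₂ ω))‖
      ≤ η₀ * ‖z₂ ω - zt₂ ω‖ / (m^3*c*X) := by
    simp only [norm_div, norm_mul]
    rw [← hA, ← hB, ← hBt]
    apply div_le_div₀ (by positivity) ?_ (by positivity) habtP
    have hlnorm : ‖(l:ℂ)‖ ≤ η₀ := by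
      rw [Complex.norm_real, Real.norm_eq_abs, _root_.abs_of_nonneg hl0]; exact hlη
    calc ‖zt₁ ω‖ * (‖(l:ℂ)‖ * ‖z₂ ω - zt₂ ω‖) ≤ 1 * (η₀ * ‖z₂ ω - zt₂ ω‖) := by
          apply mul_le_mul (hbt₁ ω) ?_ (by positivity) one_pos.le
          exact mul_le_mul_of_nonneg_right hlnorm (norm_nonneg _)
    _ = η₀ * ‖z₂ ω - zt₂ ω‖ := one_mul _
  calc ‖(z₁ ω - zt₁ ω) / ((c + ω*I + l) * ((c:ℂ) + ω*I + l - l*z₂ ω)) +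
      zt₁ ω * ((l : ℂ) * (z₂ ω - zt₂ ω)) /
        ((((c:ℂ) + ω*I + l) * ((c:ℂ) + ω*I + l - l*z₂ ω)) * ((c:ℂ) + ω*I + l - l*zt₂ ω))‖
      ≤ ‖z₁ ω - zt₁ ω‖ / (m^2 * X) + η₀ * ‖z₂ ω - zt₂ ω‖ / (m^3*c*X) :=
        le_trans (norm_add_le _ _) (add_le_add t1 t2)
  _ ≤ (m⁻¹^2 + η₀/(m^3*c)) * ((‖z₁ ω - zt₁ ω‖ + ‖z₂ ω - zt₂ ω‖) * X⁻¹) := by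
    have e1 : ‖z₁ ω - zt₁ ω‖ / (m^2 * X) = m⁻¹^2 * ‖z₁ ω - zt₁ ω‖ * X⁻¹ := by
      rw [div_eq_mul_inv, mul_inv]; ring
    have e2 : η₀ * ‖z₂ ω - zt₂ ω‖ / (m^3*c*X) = (η₀ * (m⁻¹^3 * c⁻¹)) * ‖z₂ ω - zt₂ ω‖ * X⁻¹ := by
      rw [div_eq_mul_inv, mul_inv, mul_inv]; ring
    rw [e1, e2]
    have h1 : (0:ℝ) ≤ ‖z₁ ω - zt₁ ω‖ := norm_nonneg _
    have h2 : (0:ℝ) ≤ ‖z₂ ω - zt₂ ω‖ := norm_nonneg _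
    have h3 : (0:ℝ) < X⁻¹ := by positivity
    have h4 : (0:ℝ) < m⁻¹ := by positivity
    have h5 : (0:ℝ) < c⁻¹ := by positivity
    have e3 : η₀/(m^3*c) = η₀ * (m⁻¹^3 * c⁻¹) := by
      rw [div_eq_mul_inv, mul_inv]; ring
    rw [e3]
    nlinarith [mul_pos (mul_pos (pow_pos h4 2) h3) hη₀, mul_nonneg (mul_nonneg h1 h3.le) (mul_pos (mul_pos (pow_pos h4 3) h5) hη₀).le, mul_nonneg (mul_nonneg h2 h3.le) (pow_pos h4 2).le]

lemma tail_g (c W : ℝ) (hc : 0 < c) (hW : 1 ≤ W) :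
    ∫ ω in (Set.Icc (-W) W)ᶜ, (c^2+ω^2)⁻¹ ≤ 2/W := by
  have hW0 : 0 < W := by linarith
  have hgi := g_integrable' c hc
  have hIoi_int : IntegrableOn (fun x : ℝ => (c^2+x^2)⁻¹) (Set.Ioi W) := hgi.integrableOn
  have hIio_int : IntegrableOn (fun x : ℝ => (c^2+x^2)⁻¹) (Set.Iio (-W)) := hgi.integrableOn
  have heq : Set.EqOn (fun x : ℝ => x ^ (-2:ℝ)) (fun x : ℝ => (x^2)⁻¹) (Set.Ioi W) := by
    intro x hx
    have hx0 : 0 < x := lt_trans hW0 hx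
    simp only
    rw [show (-2:ℝ) = -((2:ℕ):ℝ) by norm_num, Real.rpow_neg hx0.le, Real.rpow_natCast]
  have hinv_int : IntegrableOn (fun x : ℝ => (x^2)⁻¹) (Set.Ioi W) :=
    (integrableOn_Ioi_rpow_of_lt (show (-2:ℝ) < -1 by norm_num) hW0).congr_fun heq
      measurableSet_Ioi
  have hval : ∫ x in Set.Ioi W, (x^2)⁻¹ = 1/W := by
    rw [← setIntegral_congr_fun measurableSet_Ioi heq,
      integral_Ioi_rpow_of_lt (by norm_num) hW0]
    norm_num [Real.rpow_neg_one]
  have hIoi : ∫ x in Set.Ioi W, (c^2+x^2)⁻¹ ≤ 1/W := by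
    calc ∫ x in Set.Ioi W, (c^2+x^2)⁻¹ ≤ ∫ x in Set.Ioi W, (x^2)⁻¹ := by
          apply setIntegral_mono_on hIoi_int hinv_int measurableSet_Ioi
          intro x hx
          have hx0 : 0 < x := lt_trans hW0 hx
          apply inv_anti₀ (by positivity) (by nlinarith)
    _ = 1/W := hval
  have hIio : ∫ x in Set.Iio (-W), (c^2+x^2)⁻¹ ≤ 1/W := by
    have h1 : ∫ x in Set.Iio (-W), (c^2+x^2)⁻¹ = ∫ x in Set.Iic (-W), (c^2+x^2)⁻¹ :=
      setIntegral_congr_set Iio_ae_eq_Iic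
    have h2 := integral_comp_neg_Ioi W (fun x : ℝ => (c^2+x^2)⁻¹)
    simp only [neg_sq] at h2
    rw [h1, ← h2]
    exact hIoi
  have hcompl : (Set.Icc (-W) W)ᶜ = Set.Iio (-W) ∪ Set.Ioi W := by
    ext x
    simp only [Set.mem_compl_iff, Set.mem_Icc, not_and_or, not_le, Set.mem_union,
      Set.mem_Iio, Set.mem_Ioi]
  rw [hcompl,
    setIntegral_union (by
      rw [Set.disjoint_left]
      intro x hx1 hx2
      simp only [Set.mem_Iio, Set.mem_Ioi] at hx1 hx2
      linarith) measurableSet_Ioi hIio_int hIoi_int]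
  have : 1/W + 1/W = 2/W := by ring
  linarith

/-- Uniform differentiability bound for the resolvent-type integral
`Ψ_z(λ̃,ω) = z₁(ω)/[(c+iω+λ̃)(c+iω+λ̃−λ̃z₂(ω))]`:
(i) `λ̃ ↦ ∫ Ψ_z(λ̃,ω)dω` is continuously differentiable on `[0,η₀]` with derivative
bounded by a constant depending only on `c`, `η₀`; (ii) a uniform stability estimate
in terms of `sup_{|ω|≤W}|zᵢ−z̃ᵢ|` and `1/W`. -/
theorem resolvent_integral_uniform_bounds (c η₀ : ℝ) (hc : 0 < c) (hη₀ : 0 < η₀) :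
    ∃ C K : ℝ, 0 < K ∧
      (∀ z₁ z₂ : ℝ → ℂ, Measurable z₁ → Measurable z₂ →
        (∀ ω, ‖z₁ ω‖ ≤ 1) → (∀ ω, ‖z₂ ω‖ ≤ 1) →
        ∃ D : ℝ → ℂ, ContinuousOn D (Set.Icc 0 η₀) ∧
          (∀ l ∈ Set.Icc 0 η₀,
            HasDerivWithinAt
              (fun l' : ℝ => ∫ ω : ℝ,
                z₁ ω / ((c + ω * I + l') * (c + ω * I + l' - l' * z₂ ω)))
              (D l) (Set.Icc 0 η₀) l) ∧
          (∀ l ∈ Set.Icc 0 η₀, ‖D l‖ ≤ C)) ∧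
      (∀ z₁ z₂ zt₁ zt₂ : ℝ → ℂ, Measurable z₁ → Measurable z₂ →
        Measurable zt₁ → Measurable zt₂ →
        (∀ ω, ‖z₁ ω‖ ≤ 1) → (∀ ω, ‖z₂ ω‖ ≤ 1) →
        (∀ ω, ‖zt₁ ω‖ ≤ 1) → (∀ ω, ‖zt₂ ω‖ ≤ 1) →
        ∀ W : ℝ, 1 ≤ W → ∀ l ∈ Set.Icc 0 η₀,
          ‖(∫ ω : ℝ, z₁ ω / ((c + ω * I + l) * (c + ω * I + l - l * z₂ ω))) -
              ∫ ω : ℝ, zt₁ ω / ((c + ω * I + l) * (c + ω * I + l - l * zt₂ ω))‖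
            ≤ K * (max (⨆ ω : Set.Icc (-W) W, ‖z₁ ω - zt₁ ω‖)
                     (⨆ ω : Set.Icc (-W) W, ‖z₂ ω - zt₂ ω‖) + 1 / W)) := by
  have hm0 : 0 < 3*c/(8*(2*c+η₀)) := mpos c η₀ hc hη₀
  set m : ℝ := 3*c/(8*(2*c+η₀)) with hm
  set K₁ : ℝ := m⁻¹^2 + η₀/(m^3*c) with hK₁
  have hK₁0 : 0 < K₁ := by positivity
  set Ig : ℝ := ∫ ω : ℝ, (c^2+ω^2)⁻¹ with hIg
  have hIg0 : 0 ≤ Ig := integral_nonneg fun ω => by positivity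
  refine ⟨∫ ω : ℝ, 3/(m^3*c) * (c^2+ω^2)⁻¹, 2*K₁*Ig + 8*K₁ + 1, by positivity, ?_, ?_⟩
  · intro z₁ z₂ hz₁ hz₂ hb₁ hb₂
    refine ⟨fun l => ∫ ω : ℝ, Fd c z₁ z₂ l ω,
      contD c η₀ hc hη₀ z₁ z₂ hz₁ hz₂ hb₁ hb₂, ?_, ?_⟩
    · intro l hl
      exact (deriv_integral c η₀ hc hη₀ z₁ z₂ hz₁ hz₂ hb₁ hb₂ l hl).hasDerivWithinAt
    · intro l hl
      apply norm_integral_le_of_norm_le ((g_integrable' c hc).const_mul _)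
      exact ae_of_all _ fun ω =>
        Fd_bound c η₀ hc hη₀ z₁ z₂ hb₁ hb₂ l ω (by linarith [hl.1]) (by linarith [hl.2])
  · intro z₁ z₂ zt₁ zt₂ hz₁ hz₂ hzt₁ hzt₂ hb₁ hb₂ hbt₁ hbt₂ W hW l hl
    obtain ⟨hl0, hlη⟩ := hl
    have hW0 : (0:ℝ) < W := by linarith
    have hbdd : ∀ (f g : ℝ → ℂ), (∀ ω, ‖f ω‖ ≤ 1) → (∀ ω, ‖g ω‖ ≤ 1) →
        BddAbove (Set.range fun ω : Set.Icc (-W) W => ‖f ω - g ω‖) := by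
      intro f g hf hg
      refine ⟨2, ?_⟩
      rintro x ⟨ω, rfl⟩
      calc ‖f ↑ω - g ↑ω‖ ≤ ‖f ↑ω‖ + ‖g ↑ω‖ := norm_sub_le _ _
      _ ≤ 2 := by linarith [hf ↑ω, hg ↑ω]
    set M₁ : ℝ := ⨆ ω : Set.Icc (-W) W, ‖z₁ ω - zt₁ ω‖ with hM₁def
    set M₂ : ℝ := ⨆ ω : Set.Icc (-W) W, ‖z₂ ω - zt₂ ω‖ with hM₂def
    have hM₁b : ∀ ω ∈ Set.Icc (-W) W, ‖z₁ ω - zt₁ ω‖ ≤ M₁ := fun ω hω =>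
      le_ciSup (hbdd _ _ hb₁ hbt₁) (⟨ω, hω⟩ : Set.Icc (-W) W)
    have hM₂b : ∀ ω ∈ Set.Icc (-W) W, ‖z₂ ω - zt₂ ω‖ ≤ M₂ := fun ω hω =>
      le_ciSup (hbdd _ _ hb₂ hbt₂) (⟨ω, hω⟩ : Set.Icc (-W) W)
    set M : ℝ := max M₁ M₂ with hMdef
    have h0mem : (0:ℝ) ∈ Set.Icc (-W) W := ⟨by linarith, by linarith⟩
    have hM0 : 0 ≤ M :=
      le_trans (norm_nonneg (z₁ 0 - zt₁ 0)) (le_trans (hM₁b 0 h0mem) (le_max_left _ _))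
    have int1 := psi_int c η₀ hc hη₀ z₁ z₂ hz₁ hz₂ hb₁ hb₂ l (by linarith) (by linarith)
    have int2 := psi_int c η₀ hc hη₀ zt₁ zt₂ hzt₁ hzt₂ hbt₁ hbt₂ l (by linarith) (by linarith)
    have hnorm_int := (int1.sub int2).norm
    have hdb : ∀ ω : ℝ,
        ‖z₁ ω / ((c + ω*I + l) * (c + ω*I + l - l*z₂ ω)) -
          zt₁ ω / ((c + ω*I + l) * (c + ω*I + l - l*zt₂ ω))‖ ≤
        K₁ * ((‖z₁ ω - zt₁ ω‖ + ‖z₂ ω - zt₂ ω‖) * (c^2+ω^2)⁻¹) := fun ω =>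
      diff_bound c η₀ hc hη₀ z₁ z₂ zt₁ zt₂ hb₁ hb₂ hbt₁ hbt₂ l ω hl0 hlη
    rw [← integral_sub int1 int2]
    have hIccle : (∫ ω in Set.Icc (-W) W,
        ‖z₁ ω / ((c + ω*I + l) * (c + ω*I + l - l*z₂ ω)) -
          zt₁ ω / ((c + ω*I + l) * (c + ω*I + l - l*zt₂ ω))‖) ≤ K₁*(2*M) * Ig := by
      calc (∫ ω in Set.Icc (-W) W,
          ‖z₁ ω / ((c + ω*I + l) * (c + ω*I + l - l*z₂ ω)) -
            zt₁ ω / ((c + ω*I + l) * (c + ω*I + l - l*zt₂ ω))‖)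
          ≤ ∫ ω in Set.Icc (-W) W, K₁*(2*M) * (c^2+ω^2)⁻¹ := by
            apply setIntegral_mono_on hnorm_int.integrableOn
              (((g_integrable' c hc).const_mul (K₁*(2*M))).integrableOn) measurableSet_Icc
            intro ω hω
            refine le_trans (hdb ω) ?_
            have hxinv : (0:ℝ) ≤ (c^2+ω^2)⁻¹ := by positivity
            have h1 : ‖z₁ ω - zt₁ ω‖ ≤ M := le_trans (hM₁b ω hω) (le_max_left _ _)
            have h2 : ‖z₂ ω - zt₂ ω‖ ≤ M := le_trans (hM₂b ω hω) (le_max_right _ _)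
            calc K₁ * ((‖z₁ ω - zt₁ ω‖ + ‖z₂ ω - zt₂ ω‖) * (c^2+ω^2)⁻¹)
                ≤ K₁ * ((M + M) * (c^2+ω^2)⁻¹) := by
                  apply mul_le_mul_of_nonneg_left ?_ hK₁0.le
                  exact mul_le_mul_of_nonneg_right (by linarith) hxinv
            _ = K₁*(2*M) * (c^2+ω^2)⁻¹ := by ring
      _ ≤ ∫ ω : ℝ, K₁*(2*M) * (c^2+ω^2)⁻¹ :=
          setIntegral_le_integral ((g_integrable' c hc).const_mul (K₁*(2*M)))
            (ae_of_all _ fun ω => by positivity)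
      _ = K₁*(2*M) * Ig := by rw [integral_const_mul]
    have hComple : (∫ ω in (Set.Icc (-W) W)ᶜ,
        ‖z₁ ω / ((c + ω*I + l) * (c + ω*I + l - l*z₂ ω)) -
          zt₁ ω / ((c + ω*I + l) * (c + ω*I + l - l*zt₂ ω))‖) ≤ K₁*4 * (2/W) := by
      calc (∫ ω in (Set.Icc (-W) W)ᶜ,
          ‖z₁ ω / ((c + ω*I + l) * (c + ω*I + l - l*z₂ ω)) -
            zt₁ ω / ((c + ω*I + l) * (c + ω*I + l - l*zt₂ ω))‖)
          ≤ ∫ ω in (Set.Icc (-W) W)ᶜ, K₁*4 * (c^2+ω^2)⁻¹ := by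
            apply setIntegral_mono_on hnorm_int.integrableOn
              (((g_integrable' c hc).const_mul (K₁*4)).integrableOn) measurableSet_Icc.compl
            intro ω _
            refine le_trans (hdb ω) ?_
            have hxinv : (0:ℝ) ≤ (c^2+ω^2)⁻¹ := by positivity
            have h1 : ‖z₁ ω - zt₁ ω‖ ≤ 2 := by
              calc ‖z₁ ω - zt₁ ω‖ ≤ ‖z₁ ω‖ + ‖zt₁ ω‖ := norm_sub_le _ _
              _ ≤ 2 := by linarith [hb₁ ω, hbt₁ ω]
            have h2 : ‖z₂ ω - zt₂ ω‖ ≤ 2 := by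
              calc ‖z₂ ω - zt₂ ω‖ ≤ ‖z₂ ω‖ + ‖zt₂ ω‖ := norm_sub_le _ _
              _ ≤ 2 := by linarith [hb₂ ω, hbt₂ ω]
            calc K₁ * ((‖z₁ ω - zt₁ ω‖ + ‖z₂ ω - zt₂ ω‖) * (c^2+ω^2)⁻¹)
                ≤ K₁ * ((2 + 2) * (c^2+ω^2)⁻¹) := by
                  apply mul_le_mul_of_nonneg_left ?_ hK₁0.le
                  exact mul_le_mul_of_nonneg_right (by linarith) hxinv
            _ = K₁*4 * (c^2+ω^2)⁻¹ := by ring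
      _ = K₁*4 * ∫ ω in (Set.Icc (-W) W)ᶜ, (c^2+ω^2)⁻¹ := by rw [integral_const_mul]
      _ ≤ K₁*4 * (2/W) :=
          mul_le_mul_of_nonneg_left (tail_g c W hc hW) (by positivity)
    calc ‖∫ ω : ℝ, (z₁ ω / ((c + ω*I + l) * (c + ω*I + l - l*z₂ ω)) -
            zt₁ ω / ((c + ω*I + l) * (c + ω*I + l - l*zt₂ ω)))‖
        ≤ ∫ ω : ℝ, ‖z₁ ω / ((c + ω*I + l) * (c + ω*I + l - l*z₂ ω)) -
            zt₁ ω / ((c + ω*I + l) * (c + ω*I + l - l*zt₂ ω))‖ :=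
          norm_integral_le_integral_norm _
    _ = (∫ ω in Set.Icc (-W) W,
          ‖z₁ ω / ((c + ω*I + l) * (c + ω*I + l - l*z₂ ω)) -
            zt₁ ω / ((c + ω*I + l) * (c + ω*I + l - l*zt₂ ω))‖) +
        ∫ ω in (Set.Icc (-W) W)ᶜ,
          ‖z₁ ω / ((c + ω*I + l) * (c + ω*I + l - l*z₂ ω)) -
            zt₁ ω / ((c + ω*I + l) * (c + ω*I + l - l*zt₂ ω))‖ :=
        (integral_add_compl measurableSet_Icc hnorm_int).symm
    _ ≤ K₁*(2*M) * Ig + K₁*4 * (2/W) := add_le_add hIccle hComple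
    _ ≤ (2*K₁*Ig + 8*K₁ + 1) * (M + 1/W) := by
        have e : (2*K₁*Ig + 8*K₁ + 1)*(M + 1/W) =
            2*K₁*Ig*M + 8*K₁*(1/W) + ((8*K₁+1)*M + (2*K₁*Ig+1)*(1/W)) := by ring
        have t1 : 0 ≤ (8*K₁+1)*M := by positivity
        have t2 : 0 ≤ (2*K₁*Ig+1)*(1/W) := by positivity
        have e2 : K₁*(2*M) * Ig + K₁*4 * (2/W) = 2*K₁*Ig*M + 8*K₁*(1/W) := by ring
        rw [e, e2]
        clear_value K₁ Ig M₁ M₂ M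
        linarith
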